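/- Let 𝛄 : ℝ → ℂ be twice continuously differentiable with |𝛄'(s)| = 1 for all s ∈ ℝ, and assume there is C₁ > 0 with C₁·|s − t| ≤ |𝛄(s) − 𝛄(t)| for all s, t ∈ ℝ. Then the function (s,t) ↦ 1/(s − t) − 𝛄'(t)/(𝛄(s) − 𝛄(t)), defined for s ≠ t, extends to a continuous function F : ℝ² → ℂ whose value on the diagonal is F(t,t) = 𝛄''(t)/(2·𝛄'(t)). -/

import Mathlib

open intervalIntegral MeasureTheory

/-- Let `𝛄 : ℝ → ℂ` be twice continuously differentiable with
`|𝛄'(s)| = 1` for all `s`, and assume `C₁ |s - t| ≤ |𝛄 s - 𝛄 t|` for all `s, t` with some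
`C₁ > 0`. Then `(s,t) ↦ 1/(s - t) - 𝛄'(t)/(𝛄 s - 𝛄 t)`, defined for `s ≠ t`, extends to a
continuous function `F : ℝ² → ℂ` with `F (t, t) = 𝛄''(t) / (2 𝛄'(t))`. -/
theorem stmt_12 (g : ℝ → ℂ) (hg : ContDiff ℝ 2 g)
    (hunit : ∀ s : ℝ, ‖deriv g s‖ = 1)
    (C₁ : ℝ) (hC₁ : 0 < C₁)
    (hlow : ∀ s t : ℝ, C₁ * |s - t| ≤ ‖g s - g t‖) :
    ∃ F : ℝ × ℝ → ℂ, Continuous F ∧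
      (∀ s t : ℝ, s ≠ t →
        F (s, t) = 1 / ((s : ℂ) - (t : ℂ)) - deriv g t / (g s - g t)) ∧
      (∀ t : ℝ, F (t, t) = deriv (deriv g) t / (2 * deriv g t)) := by
  have hg2 : ContDiff ℝ (1 + 1) g := by norm_num; exact hg
  obtain ⟨hgd, -, hg1⟩ := contDiff_succ_iff_deriv.mp hg2
  obtain ⟨hgd', hc''⟩ := contDiff_one_iff_deriv.mp hg1
  have hc' : Continuous (deriv g) := hg1.continuous
  -- the affine path
  set l : ℝ → ℝ → ℝ → ℝ := fun s t u => t + u * (s - t) with hl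
  have hlc : Continuous (fun q : (ℝ × ℝ) × ℝ => l q.1.1 q.1.2 q.2) := by
    simp only [hl]; fun_prop
  have hld : ∀ s t u : ℝ, HasDerivAt (fun u => l s t u) (s - t) u := by
    intro s t u
    simpa [hl] using ((hasDerivAt_id u).mul_const (s - t)).const_add t
  -- the two divided-difference integrals
  set H : ℝ × ℝ → ℂ := fun p => ∫ u in (0:ℝ)..1, deriv g (l p.1 p.2 u) with hH
  set K : ℝ × ℝ → ℂ :=
    fun p => ∫ u in (0:ℝ)..1, (1 - u) • deriv (deriv g) (l p.1 p.2 u) with hK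
  have hHc : Continuous H := by
    apply continuous_parametric_intervalIntegral_of_continuous'
      (f := fun (p : ℝ × ℝ) u => deriv g (l p.1 p.2 u))
    exact hc'.comp hlc
  have hKc : Continuous K := by
    apply continuous_parametric_intervalIntegral_of_continuous'
      (f := fun (p : ℝ × ℝ) u => (1 - u) • deriv (deriv g) (l p.1 p.2 u))
    exact ((continuous_const.sub continuous_snd)).smul (hc''.comp hlc)
  -- key identity 1
  have key1 : ∀ s t : ℝ, (s - t) • H (s, t) = g s - g t := by
    intro s t
    have h1 : ∀ u ∈ Set.uIcc (0:ℝ) 1,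
        HasDerivAt (fun u => g (l s t u)) ((s - t) • deriv g (l s t u)) u := by
      intro u _
      exact HasDerivAt.scomp u ((hgd _).hasDerivAt) (hld s t u)
    have h2 : IntervalIntegrable (fun u => (s - t) • deriv g (l s t u))
        volume 0 1 :=
      (show Continuous (fun u => (s - t) • deriv g (l s t u)) by simp only [hl]; fun_prop).intervalIntegrable _ _
    have := intervalIntegral.integral_eq_sub_of_hasDerivAt h1 h2
    rw [intervalIntegral.integral_smul] at this
    simpa [hl] using this
  -- key identity 2
  have key2 : ∀ s t : ℝ, (s - t) • K (s, t) = H (s, t) - deriv g t := by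
    intro s t
    have h1 : ∀ u ∈ Set.uIcc (0:ℝ) 1,
        HasDerivAt (fun u => (1 - u) • deriv g (l s t u))
          ((1 - u) • ((s - t) • deriv (deriv g) (l s t u)) +
            (-1 : ℝ) • deriv g (l s t u)) u := by
      intro u _
      have hw : HasDerivAt (fun u => deriv g (l s t u))
          ((s - t) • deriv (deriv g) (l s t u)) u :=
        HasDerivAt.scomp u ((hgd' _).hasDerivAt) (hld s t u)
      have hcuf : HasDerivAt (fun u : ℝ => 1 - u) (-1 : ℝ) u := by
        simpa using (hasDerivAt_id u).const_sub 1
      exact hcuf.smul hw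
    have hint1 : IntervalIntegrable
        (fun u => (1 - u) • ((s - t) • deriv (deriv g) (l s t u))) volume 0 1 :=
      (show Continuous (fun u => (1 - u) • ((s - t) • deriv (deriv g) (l s t u))) by
        simp only [hl]; fun_prop).intervalIntegrable _ _
    have hint2 : IntervalIntegrable
        (fun u => (-1 : ℝ) • deriv g (l s t u)) volume 0 1 :=
      (show Continuous (fun u => (-1 : ℝ) • deriv g (l s t u)) by simp only [hl]; fun_prop).intervalIntegrable _ _
    have h2 := intervalIntegral.integral_eq_sub_of_hasDerivAt h1 (hint1.add hint2)
    rw [intervalIntegral.integral_add hint1 hint2,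
      intervalIntegral.integral_smul] at h2
    have hsw : (∫ u in (0:ℝ)..1, (1 - u) • ((s - t) • deriv (deriv g) (l s t u)))
        = (s - t) • K (s, t) := by
      rw [hK]
      rw [← intervalIntegral.integral_smul]
      congr 1; ext u; rw [smul_comm]
    rw [hsw] at h2
    have e0 : l s t 0 = t := by simp [hl]
    rw [e0] at h2
    have h4 : (s - t) • K (s, t) - H (s, t) = -deriv g t := by
      simpa [neg_one_smul, sub_eq_add_neg] using h2
    have h5 := sub_eq_iff_eq_add.mp h4
    rw [h5]; abel
  -- diagonal values
  have hHdiag : ∀ t : ℝ, H (t, t) = deriv g t := by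
    intro t; simp [hH, hl]
  have hKdiag : ∀ t : ℝ, K (t, t) = (2 : ℂ)⁻¹ * deriv (deriv g) t := by
    intro t
    have : K (t, t) = (∫ u in (0:ℝ)..1, (1 - u : ℝ)) • deriv (deriv g) t := by
      rw [hK, ← intervalIntegral.integral_smul_const]
      simp [hl]
    rw [this]
    have : (∫ u in (0:ℝ)..1, (1 - u : ℝ)) = 1 / 2 := by
      simp [intervalIntegral.integral_sub intervalIntegrable_const
        (intervalIntegral.intervalIntegrable_id)]
      norm_num
    rw [this, Complex.real_smul]; push_cast; ring
  -- H never vanishes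
  have hHne : ∀ p : ℝ × ℝ, H p ≠ 0 := by
    rintro ⟨s, t⟩ h0
    by_cases hst : s = t
    · subst hst
      rw [hHdiag] at h0
      have := hunit s; rw [h0] at this; simp at this
    · have h1 := key1 s t
      rw [h0, smul_zero] at h1
      have h2 := hlow s t
      rw [← h1] at h2
      simp only [norm_zero] at h2
      have : 0 < C₁ * |s - t| := by
        apply mul_pos hC₁; rw [abs_pos]; intro h; apply hst; linarith
      linarith
  refine ⟨fun p => K p / H p, hKc.div hHc hHne, ?_, ?_⟩
  · intro s t hst
    have hstC : ((s : ℂ) - t) ≠ 0 := by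
      intro h; apply hst
      have := sub_eq_zero.mp h
      exact_mod_cast this
    have h1 : ((s : ℂ) - t) * H (s, t) = g s - g t := by
      have := key1 s t
      rwa [Complex.real_smul, Complex.ofReal_sub] at this
    have h2 : ((s : ℂ) - t) * K (s, t) = H (s, t) - deriv g t := by
      have := key2 s t
      rwa [Complex.real_smul, Complex.ofReal_sub] at this
    have hHne' := hHne (s, t)
    rw [← h1]
    field_simp
    linear_combination h2
  · intro t
    show K (t, t) / H (t, t) = _
    rw [hKdiag, hHdiag]
    have hne : deriv g t ≠ 0 := by
      intro h; have := hunit t; rw [h] at this; simp at this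
    field_simp
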